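/- For every integer n ≥ 1, the 2n-th Bernoulli number satisfies B_{2n} = (2^{2n+1}·(2n)!/(2^{2n}−2)) · ∑_{k=1}^{n} ((−1)^{k+1}/(2n+k)!) · C(n+1, k+1) · ∑_{l=0}^{⌊k/2⌋} (−1)^{l} · C(k,l) · (k/2 − l)^{k+2n}, where all arithmetic is in ℚ. -/

import Mathlib

open PowerSeries Finset

namespace BernoulliDS

/-- `e^x` as a power series over `ℚ`. -/
noncomputable def E : PowerSeries ℚ := PowerSeries.exp ℚ

/-- `e^{-x}` as a power series over `ℚ`. -/
noncomputable def E' : PowerSeries ℚ := PowerSeries.rescale (-1 : ℚ) (PowerSeries.exp ℚ)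

/-- `x coth x` as a power series. -/
noncomputable def Cc : PowerSeries ℚ :=
  PowerSeries.X + PowerSeries.rescale (2 : ℚ) (bernoulliPowerSeries ℚ)

/-- `x / sinh x` as a power series. -/
noncomputable def G : PowerSeries ℚ :=
  2 * PowerSeries.rescale (2⁻¹ : ℚ) Cc - Cc

/-- `sinh x` as a power series. -/
noncomputable def Sh : PowerSeries ℚ := PowerSeries.C (R := ℚ) (2⁻¹) * (E - E')

lemma hEE' : E * E' = 1 := by
  have h := exp_mul_exp_eq_exp_add (1 : ℚ) (-1)
  simp only [rescale_one] at h
  simpa [E, E', rescale_zero] using h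

lemma hE2 : E * E = rescale (2 : ℚ) (exp ℚ) := by
  have h := exp_mul_exp_eq_exp_add (1 : ℚ) (1)
  simp only [rescale_one] at h
  norm_num at h
  simpa [E] using h

lemma hCc : Cc * (rescale (2 : ℚ) (exp ℚ) - 1) = X * (rescale (2 : ℚ) (exp ℚ) + 1) := by
  have h := congrArg (rescale (2 : ℚ)) (bernoulliPowerSeries_mul_exp_sub_one ℚ)
  rw [map_mul, map_sub, map_one, rescale_X] at h
  have h2 : (PowerSeries.C (R := ℚ)) 2 = 2 := by
    rw [show (2:ℚ) = ((2:ℕ):ℚ) by norm_num, map_natCast]; norm_cast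
  rw [h2] at h
  unfold Cc
  linear_combination h

end BernoulliDS

namespace BernoulliDS

lemma hhalf : rescale (2⁻¹ : ℚ) Cc * (exp ℚ - 1) = PowerSeries.C (R := ℚ) 2⁻¹ * X * (exp ℚ + 1) := by
  have h := congrArg (rescale (2⁻¹ : ℚ)) hCc
  simp only [map_mul, map_sub, map_add, map_one] at h
  rw [rescale_X, rescale_rescale] at h
  norm_num at h
  simpa [one_div] using h

end BernoulliDS

namespace BernoulliDS

lemma hG : G * (E - E') = 2 * X := by
  have hEne : (E : PowerSeries ℚ) ≠ 0 := fun h => by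
    have := congrArg (constantCoeff (R := ℚ)) h
    simp [E] at this
  apply mul_right_cancel₀ hEne
  have h5 : (2 : PowerSeries ℚ) * PowerSeries.C (R := ℚ) 2⁻¹ = 1 := by
    rw [show (2 : PowerSeries ℚ) = PowerSeries.C (R := ℚ) 2 by
      rw [show (2:ℚ) = ((2:ℕ):ℚ) by norm_num, map_natCast]; norm_cast, ← map_mul]
    norm_num
  have h2 := hhalf
  have h1 := hCc
  have h3 := hE2
  have h4 := hEE'
  unfold G E E' at *
  linear_combination (2*(exp ℚ + 1))*h2 - h1 +
    (X - Cc)*h3 + (Cc - 2*rescale (2⁻¹:ℚ) Cc)*h4 +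
    (X*(exp ℚ+1)^2)*h5

end BernoulliDS

namespace BernoulliDS

lemma two_eq_C : (2 : PowerSeries ℚ) = PowerSeries.C (R := ℚ) 2 := by
  rw [show (2:ℚ) = ((2:ℕ):ℚ) by norm_num, map_natCast]; norm_cast

lemma coeff_Cc (m : ℕ) (hm : m ≠ 1) :
    coeff (R := ℚ) m Cc = 2 ^ m * bernoulli m / m.factorial := by
  simp [Cc, coeff_rescale, bernoulliPowerSeries, coeff_mk, coeff_X, hm, mul_div_assoc]

lemma coeff_G_eq (n : ℕ) (hn : 1 ≤ n) :
    coeff (R := ℚ) (2*n) G = (2 - 2^(2*n)) * bernoulli (2*n) / (2*n).factorial := by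
  have h1 : (2*n) ≠ 1 := by omega
  have key : (2⁻¹:ℚ)^(2*n) * 2^(2*n) = 1 := by rw [← mul_pow]; norm_num
  rw [G, map_sub, two_eq_C, coeff_C_mul, coeff_rescale, coeff_Cc _ h1]
  linear_combination (2*bernoulli (2*n)/((2*n).factorial : ℚ))*key

lemma coeff_E' (m : ℕ) : coeff (R := ℚ) m E' = (-1)^m * (1 / m.factorial) := by
  simp [E', coeff_rescale]

lemma coeff_Sh (m : ℕ) :
    coeff (R := ℚ) m Sh = 2⁻¹ * (1 / m.factorial - (-1)^m * (1 / m.factorial)) := by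
  simp [Sh, coeff_C_mul, coeff_E', E]

/-- the series `U` with `sinh x = x (1 + U)`. -/
noncomputable def U : PowerSeries ℚ :=
  PowerSeries.mk fun m => if m = 0 then 0 else coeff (R := ℚ) (m+1) Sh

lemma hU0 : coeff (R := ℚ) 0 U = 0 := by simp [U, coeff_mk]

lemma hU1 : coeff (R := ℚ) 1 U = 0 := by
  simp [U, coeff_mk, coeff_Sh]

lemma hXU : Sh = X * (1 + U) := by
  ext m
  cases m with
  | zero =>
    have h1 : coeff (R := ℚ) 0 Sh = 0 := by rw [coeff_Sh]; norm_num
    have h2 : coeff (R := ℚ) 0 (X * (1 + U)) = 0 := by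
      rw [coeff_zero_eq_constantCoeff_apply, map_mul, constantCoeff_X, zero_mul]
    rw [h1, h2]
  | succ m =>
    rw [coeff_succ_X_mul]
    cases m with
    | zero =>
      simp [coeff_Sh, U, coeff_mk, Nat.factorial]
      norm_num
    | succ j =>
      rw [map_add, U, coeff_mk]
      simp [Nat.succ_ne_zero]

end BernoulliDS

namespace BernoulliDS

lemma hUpow : ∀ j m : ℕ, m < 2*j → coeff (R := ℚ) m (U^j) = 0 := by
  intro j
  induction j with
  | zero => intro m hm; omega
  | succ j ih =>
    intro m hm
    rw [pow_succ, mul_comm, coeff_mul]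
    apply Finset.sum_eq_zero
    rintro ⟨a, b⟩ hab
    rw [Finset.HasAntidiagonal.mem_antidiagonal] at hab
    rcases Nat.lt_or_ge a 2 with ha | ha
    · interval_cases a
      · rw [hU0, zero_mul]
      · rw [hU1, zero_mul]
    · rw [ih b (by omega), mul_zero]

lemma hGU : G * (1 + U) = 1 := by
  have h5 : (2 : PowerSeries ℚ) * PowerSeries.C (R := ℚ) 2⁻¹ = 1 := by
    rw [two_eq_C, ← map_mul]; norm_num
  have h : G * Sh = X := by
    rw [Sh]
    have := hG
    apply mul_left_cancel₀ (a := (2 : PowerSeries ℚ)) (by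
      intro h
      have := congrArg (constantCoeff (R := ℚ)) h
      rw [two_eq_C, constantCoeff_C, map_zero] at this
      norm_num at this)
    calc (2 : PowerSeries ℚ) * (G * (PowerSeries.C (R := ℚ) 2⁻¹ * (E - E')))
        = (2 * PowerSeries.C (R := ℚ) 2⁻¹) * (G * (E - E')) := by ring
      _ = 2 * X := by rw [h5, one_mul, hG]
  have hX : (X : PowerSeries ℚ) * (G * (1 + U)) = X * 1 := by
    rw [mul_one]
    calc (X : PowerSeries ℚ) * (G * (1 + U)) = G * (X * (1 + U)) := by ring
      _ = G * Sh := by rw [← hXU]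
      _ = X := h
  exact mul_left_cancel₀ PowerSeries.X_ne_zero hX

end BernoulliDS

namespace BernoulliDS

lemma coeff_neg_one_pow_mul (j m : ℕ) (f : PowerSeries ℚ) :
    coeff (R := ℚ) m ((-1 : PowerSeries ℚ)^j * f) = (-1:ℚ)^j * coeff (R := ℚ) m f := by
  rw [show ((-1 : PowerSeries ℚ))^j = PowerSeries.C (R := ℚ) ((-1)^j) by
    rw [map_pow, map_neg, map_one], coeff_C_mul]

lemma coeff_G_sum (n : ℕ) (hn : 1 ≤ n) :
    coeff (R := ℚ) (2*n) G = ∑ j ∈ Finset.range (n+1), (-1:ℚ)^j * coeff (R := ℚ) (2*n) (U^j) := by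
  have geom := geom_sum_mul (-U) (n+1)
  have hrep : G = (∑ j ∈ Finset.range (n+1), (-U)^j) + (-U)^(n+1) * G := by
    linear_combination (∑ j ∈ Finset.range (n+1), (-U)^j) * hGU + G * geom
  have h2 : coeff (R := ℚ) (2*n) ((-U)^(n+1) * G) = 0 := by
    rw [neg_pow, mul_assoc, coeff_neg_one_pow_mul, coeff_mul]
    rw [Finset.sum_eq_zero, mul_zero]
    rintro ⟨a, b⟩ hab
    rw [Finset.HasAntidiagonal.mem_antidiagonal] at hab
    rw [hUpow (n+1) a (by omega), zero_mul]
  calc coeff (R := ℚ) (2*n) G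
      = coeff (R := ℚ) (2*n) ((∑ j ∈ Finset.range (n+1), (-U)^j) + (-U)^(n+1) * G) := by
        rw [← hrep]
    _ = ∑ j ∈ Finset.range (n+1), (-1:ℚ)^j * coeff (R := ℚ) (2*n) (U^j) := by
        rw [map_add, h2, add_zero, map_sum]
        exact Finset.sum_congr rfl fun j _ => by rw [neg_pow, coeff_neg_one_pow_mul]

end BernoulliDS

namespace BernoulliDS

lemma coeff_Sh_pow_U (n k : ℕ) :
    coeff (R := ℚ) (2*n + k) (Sh^k) =
      ∑ j ∈ Finset.range (k+1), (k.choose j : ℚ) * coeff (R := ℚ) (2*n) (U^j) := by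
  rw [hXU, mul_pow, coeff_X_pow_mul, add_comm (1 : PowerSeries ℚ) U, add_pow, map_sum]
  apply Finset.sum_congr rfl
  intro j _
  have hcast : ((k.choose j : ℕ) : PowerSeries ℚ) = PowerSeries.C (R := ℚ) ((k.choose j : ℕ) : ℚ) := by
    rw [map_natCast (PowerSeries.C (R := ℚ)) (k.choose j)]
  rw [one_pow, mul_one, hcast, mul_comm (U^j), coeff_C_mul]

end BernoulliDS

namespace BernoulliDS

lemma coeff_Sh_pow (k M : ℕ) :
    coeff (R := ℚ) M (Sh ^ k) =
      (∑ l ∈ Finset.range (k+1), (-1:ℚ)^l * (k.choose l : ℚ) * ((k:ℚ) - 2*l)^M) /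
        (2^k * M.factorial) := by
  have hSh_eq : Sh = (-(PowerSeries.C (R := ℚ) 2⁻¹ * E')) + PowerSeries.C (R := ℚ) 2⁻¹ * E := by
    rw [Sh]; ring
  rw [hSh_eq, add_pow, map_sum, Finset.sum_div]
  apply Finset.sum_congr rfl
  intro l hl
  have hlk : l ≤ k := by
    rw [Finset.mem_range] at hl; omega
  have h1 : E'^l = rescale (-(l:ℚ)) (exp ℚ) := by
    rw [E', ← map_pow, exp_pow_eq_rescale_exp, rescale_rescale]
    norm_num
  have h2 : E^(k-l) = rescale ((k:ℚ) - l) (exp ℚ) := by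
    rw [E, exp_pow_eq_rescale_exp]
    congr 1
    rw [Nat.cast_sub hlk]
  have h3 : rescale (-(l:ℚ)) (exp ℚ) * rescale ((k:ℚ)-(l:ℚ)) (exp ℚ) =
      rescale ((k:ℚ) - 2*l) (exp ℚ) := by
    rw [exp_mul_exp_eq_exp_add]
    congr 1
    ring
  have hc : (PowerSeries.C (R := ℚ) 2⁻¹)^l * (PowerSeries.C (R := ℚ) 2⁻¹)^(k-l) =
      PowerSeries.C (R := ℚ) (2⁻¹^k) := by
    rw [← map_pow, ← map_pow, ← map_mul, ← pow_add, Nat.add_sub_cancel' hlk]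
  have hne : ((-1 : PowerSeries ℚ))^l = PowerSeries.C (R := ℚ) ((-1:ℚ)^l) := by
    rw [map_pow, map_neg, map_one]
  have hnat : ((k.choose l : ℕ) : PowerSeries ℚ) = PowerSeries.C (R := ℚ) ((k.choose l : ℕ) : ℚ) := by
    rw [map_natCast (PowerSeries.C (R := ℚ)) (k.choose l)]
  have hterm : (-(PowerSeries.C (R := ℚ) 2⁻¹ * E'))^l * (PowerSeries.C (R := ℚ) 2⁻¹ * E)^(k-l) *
      ((k.choose l : ℕ) : PowerSeries ℚ) =
      PowerSeries.C (R := ℚ) ((-1:ℚ)^l * (k.choose l : ℚ) * 2⁻¹^k) *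
        rescale ((k:ℚ) - 2*l) (exp ℚ) := by
    calc (-(PowerSeries.C (R := ℚ) 2⁻¹ * E'))^l * (PowerSeries.C (R := ℚ) 2⁻¹ * E)^(k-l) *
        ((k.choose l : ℕ) : PowerSeries ℚ)
        = ((-1 : PowerSeries ℚ)^l * ((k.choose l : ℕ) : PowerSeries ℚ) *
            ((PowerSeries.C (R := ℚ) 2⁻¹)^l * (PowerSeries.C (R := ℚ) 2⁻¹)^(k-l))) * (E'^l * E^(k-l)) := by
          ring
      _ = PowerSeries.C (R := ℚ) ((-1:ℚ)^l * (k.choose l : ℚ) * 2⁻¹^k) *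
            rescale ((k:ℚ) - 2*l) (exp ℚ) := by
          rw [hc, hne, hnat, h1, h2, h3, ← map_mul, ← map_mul]
  rw [hterm, coeff_C_mul, coeff_rescale, coeff_exp]
  have hfac : ((M.factorial : ℚ)) ≠ 0 := by
    exact_mod_cast M.factorial_ne_zero
  have h2k : ((2:ℚ)^k) ≠ 0 := by positivity
  field_simp
  rw [Algebra.algebraMap_self, RingHom.id_apply]
  field_simp
  have hk2 : (1/2:ℚ)^k * 2^k = 1 := by rw [← mul_pow]; norm_num
  linear_combination ((k.choose l : ℚ) * ((k:ℚ) - 2*l)^M) * hk2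
end BernoulliDS

namespace BernoulliDS

lemma ortho (m j : ℕ) (h : j < m) :
    ∑ k ∈ Finset.Icc j m, (-1:ℚ)^k * ((m.choose k : ℕ) : ℚ) * ((k.choose j : ℕ) : ℚ) = 0 := by
  have step : ∀ k ∈ Finset.Icc j m,
      (-1:ℚ)^k * ((m.choose k : ℕ) : ℚ) * ((k.choose j : ℕ) : ℚ) =
      ((m.choose j : ℕ) : ℚ) * ((-1:ℚ)^k * (((m-j).choose (k-j) : ℕ) : ℚ)) := by
    intro k hk
    rw [Finset.mem_Icc] at hk
    have := Nat.choose_mul (n := m) (hsk := hk.1)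
    have hcast : ((m.choose k : ℕ) : ℚ) * ((k.choose j : ℕ) : ℚ) =
        ((m.choose j : ℕ) : ℚ) * (((m-j).choose (k-j) : ℕ) : ℚ) := by
      exact_mod_cast congrArg (Nat.cast : ℕ → ℚ) this
    linear_combination (-1:ℚ)^k * hcast
  rw [Finset.sum_congr rfl step, ← Finset.mul_sum]
  have hIcc : Finset.Icc j m = Finset.Ico j (m+1) := by
    rw [Finset.Ico_add_one_right_eq_Icc]
  rw [hIcc, Finset.sum_Ico_eq_sum_range]
  have hrw : ∀ i ∈ Finset.range (m + 1 - j),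
      (-1:ℚ)^(j+i) * (((m-j).choose ((j+i)-j) : ℕ) : ℚ) =
      (-1:ℚ)^j * ((-1:ℚ)^i * (((m-j).choose i : ℕ) : ℚ)) := by
    intro i _
    rw [Nat.add_sub_cancel_left, pow_add]
    ring
  rw [Finset.sum_congr rfl hrw, ← Finset.mul_sum]
  have hm1j : m + 1 - j = (m - j) + 1 := by omega
  have halt := Int.alternating_sum_range_choose (n := m - j)
  rw [if_neg (by omega : ¬ (m - j) = 0)] at halt
  have haltq : ∑ i ∈ Finset.range ((m-j) + 1), (-1:ℚ)^i * (((m-j).choose i : ℕ) : ℚ) = 0 := by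
    exact_mod_cast congrArg (Int.cast : ℤ → ℚ) halt
  rw [hm1j, haltq]
  ring

lemma comb (j : ℕ) (hj : 1 ≤ j) : ∀ n, j ≤ n →
    ∑ k ∈ Finset.Icc j n, (-1:ℚ)^(k+1) * (((n+1).choose (k+1) : ℕ) : ℚ) *
      ((k.choose j : ℕ) : ℚ) = (-1:ℚ)^(j+1) := by
  intro n
  induction n with
  | zero => intro h; interval_cases j
  | succ n ih =>
    intro hjn
    rcases Nat.lt_or_ge n j with hlt | hge
    · -- j = n + 1
      have hj1 : j = n + 1 := by omega
      subst hj1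
      rw [Finset.Icc_self, Finset.sum_singleton, Nat.choose_self, Nat.choose_self]
      norm_num
    · -- j ≤ n
      have htop : Finset.Icc j (n+1) = insert (n+1) (Finset.Icc j n) := by
        rw [← Finset.insert_Icc_right_eq_Icc_add_one (by omega)]
      rw [htop, Finset.sum_insert (by simp)]
      have hsplit : ∀ k ∈ Finset.Icc j n,
          (-1:ℚ)^(k+1) * (((n+2).choose (k+1) : ℕ) : ℚ) * ((k.choose j : ℕ) : ℚ) =
          (-1:ℚ)^(k+1) * (((n+1).choose (k+1) : ℕ) : ℚ) * ((k.choose j : ℕ) : ℚ) +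
          (-1:ℚ)^(k+1) * (((n+1).choose k : ℕ) : ℚ) * ((k.choose j : ℕ) : ℚ) := by
        intro k hk
        have hch : (n+2).choose (k+1) = (n+1).choose k + (n+1).choose (k+1) :=
          Nat.choose_succ_succ (n+1) k
        rw [hch]
        push_cast
        ring
      rw [Finset.sum_congr rfl hsplit, Finset.sum_add_distrib]
      have horth := ortho (n+1) j (by omega)
      have htop2 : Finset.Icc j (n+1) = insert (n+1) (Finset.Icc j n) := htop
      rw [htop2, Finset.sum_insert (by simp)] at horth
      have hrw2 : ∀ k ∈ Finset.Icc j n,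
          (-1:ℚ)^(k+1) * (((n+1).choose k : ℕ) : ℚ) * ((k.choose j : ℕ) : ℚ) =
          -((-1:ℚ)^k * (((n+1).choose k : ℕ) : ℚ) * ((k.choose j : ℕ) : ℚ)) := by
        intro k _
        rw [pow_succ]
        ring
      rw [Finset.sum_congr rfl hrw2]
      simp only [Finset.sum_neg_distrib] at *
      simp only [Nat.choose_self, Nat.cast_one] at *
      linear_combination ih hge - horth

end BernoulliDS

namespace BernoulliDS

lemma half_sum (n k : ℕ) (hk : 1 ≤ k) :
    ∑ l ∈ Finset.range (k+1), (-1:ℚ)^l * (k.choose l : ℚ) * ((k:ℚ)/2 - (l:ℚ))^(k+2*n)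
    = 2 * ∑ l ∈ Finset.range (k/2+1),
        (-1:ℚ)^l * (k.choose l : ℚ) * ((k:ℚ)/2 - (l:ℚ))^(k+2*n) := by
  set f : ℕ → ℚ := fun l => (-1:ℚ)^l * (k.choose l : ℚ) * ((k:ℚ)/2 - (l:ℚ))^(k+2*n) with hf
  have hsymm : ∀ j, j ≤ k → f (k - j) = f j := by
    intro j hj
    simp only [hf]
    rw [Nat.cast_sub hj, Nat.choose_symm hj,
      show ((k:ℚ)/2 - ((k:ℚ) - (j:ℚ))) = -((k:ℚ)/2 - (j:ℚ)) by ring, neg_pow ((k:ℚ)/2 - (j:ℚ)) (k+2*n)]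
    have hpow : (-1:ℚ)^(k-j) * (-1:ℚ)^(k+2*n) = (-1:ℚ)^j := by
      have h2 : (k - j) + (k + 2*n) + j = 2*(k+n) := by omega
      have h3 : ((-1:ℚ))^((k-j)+(k+2*n)+j) = 1 := by rw [h2, pow_mul]; norm_num
      rw [pow_add, pow_add] at h3
      have h4 : ((-1:ℚ))^j * ((-1:ℚ))^j = 1 := by
        rw [← pow_add, ← two_mul, pow_mul]; norm_num
      have h5 := h3.trans h4.symm
      exact mul_right_cancel₀ (pow_ne_zero j (by norm_num : (-1:ℚ) ≠ 0)) h5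
    linear_combination ((k.choose j : ℚ) * ((k:ℚ)/2 - (j:ℚ))^(k+2*n)) * hpow
  have hle : k/2 + 1 ≤ k + 1 := by omega
  rw [← Finset.sum_range_add_sum_Ico f hle]
  have hrefl0 := Finset.sum_Ico_reflect f 0 (by omega : k - k/2 ≤ k + 1)
  rw [show k + 1 - (k - k/2) = k/2 + 1 by omega, Nat.sub_zero] at hrefl0
  simp only [Nat.Ico_zero_eq_range] at hrefl0
  have hstep1 : ∑ j ∈ Finset.range (k - k/2), f (k - j) = ∑ j ∈ Finset.range (k - k/2), f j := by
    apply Finset.sum_congr rfl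
    intro j hjm
    rw [Finset.mem_range] at hjm
    exact hsymm j (by omega)
  have hstep2 : ∑ j ∈ Finset.range (k - k/2), f j = ∑ j ∈ Finset.range (k/2 + 1), f j := by
    apply Finset.sum_subset
    · apply Finset.range_subset_range.2; omega
    · intro x hx hnx
      rw [Finset.mem_range] at hx
      rw [Finset.mem_range, not_lt] at hnx
      have hkx : k = 2 * x := by omega
      simp only [hf]
      have : ((k:ℚ)/2 - (x:ℚ)) = 0 := by
        rw [hkx]; push_cast; ring
      rw [this, zero_pow (by omega : k + 2*n ≠ 0), mul_zero]
  rw [← hrefl0, hstep1, hstep2]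
  ring

end BernoulliDS

namespace BernoulliDS

lemma Sigma_eq (n : ℕ) (hn : 1 ≤ n) :
    ∑ k ∈ Finset.Icc 1 n, (-1:ℚ)^(k+1) * (((n+1).choose (k+1) : ℕ) : ℚ) *
        coeff (R := ℚ) (2*n+k) (Sh^k)
      = (2^(2*n) - 2) * bernoulli (2*n) / (2*n).factorial := by
  have ha0 : coeff (R := ℚ) (2*n) (U^0) = 0 := by
    rw [pow_zero, coeff_one, if_neg (by omega : ¬ 2*n = 0)]
  have hstep1 : ∀ k ∈ Finset.Icc 1 n,
      (-1:ℚ)^(k+1) * (((n+1).choose (k+1):ℕ):ℚ) * coeff (R := ℚ) (2*n+k) (Sh^k)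
      = ∑ j ∈ Finset.range (n+1), (-1:ℚ)^(k+1) * (((n+1).choose (k+1):ℕ):ℚ) *
          ((k.choose j : ℕ):ℚ) * coeff (R := ℚ) (2*n) (U^j) := by
    intro k hk
    rw [Finset.mem_Icc] at hk
    rw [coeff_Sh_pow_U]
    have hext : ∑ j ∈ Finset.range (k+1), (k.choose j : ℚ) * coeff (R := ℚ) (2*n) (U^j)
        = ∑ j ∈ Finset.range (n+1), (k.choose j : ℚ) * coeff (R := ℚ) (2*n) (U^j) := by
      apply Finset.sum_subset (Finset.range_subset_range.2 (by omega))
      intro x hx hnx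
      rw [Finset.mem_range, not_lt] at hnx
      rw [Nat.choose_eq_zero_of_lt (by omega), Nat.cast_zero, zero_mul]
    rw [hext, Finset.mul_sum]
    apply Finset.sum_congr rfl
    intro j _
    ring
  rw [Finset.sum_congr rfl hstep1, Finset.sum_comm]
  have hstep2 : ∀ j ∈ Finset.range (n+1),
      ∑ k ∈ Finset.Icc 1 n, (-1:ℚ)^(k+1) * (((n+1).choose (k+1):ℕ):ℚ) * ((k.choose j:ℕ):ℚ)
        * coeff (R := ℚ) (2*n) (U^j)
      = -((-1:ℚ)^j * coeff (R := ℚ) (2*n) (U^j)) := by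
    intro j hj
    rw [← Finset.sum_mul]
    rcases Nat.eq_zero_or_pos j with hj0 | hjpos
    · subst hj0
      rw [ha0, mul_zero]
      simp
    · have hjn : j ≤ n := by rw [Finset.mem_range] at hj; omega
      have hsub : ∑ k ∈ Finset.Icc j n, (-1:ℚ)^(k+1) * (((n+1).choose (k+1):ℕ):ℚ) *
            ((k.choose j:ℕ):ℚ)
          = ∑ k ∈ Finset.Icc 1 n, (-1:ℚ)^(k+1) * (((n+1).choose (k+1):ℕ):ℚ) *
            ((k.choose j:ℕ):ℚ) := by
        apply Finset.sum_subset (Finset.Icc_subset_Icc (by omega) le_rfl)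
        intro x hx hnx
        rw [Finset.mem_Icc] at hx
        rw [Finset.mem_Icc, not_and_or, not_le, not_le] at hnx
        have hxj : x < j := by omega
        rw [Nat.choose_eq_zero_of_lt hxj, Nat.cast_zero, mul_zero]
      rw [← hsub, comb j hjpos n hjn, pow_succ]
      ring
  rw [Finset.sum_congr rfl hstep2]
  rw [Finset.sum_neg_distrib, ← coeff_G_sum n hn, coeff_G_eq n hn]
  ring

end BernoulliDS



/-- For every integer `n ≥ 1`, the `2n`-th Bernoulli number satisfies
`B_{2n} = (2^{2n+1}·(2n)!/(2^{2n}−2)) · ∑_{k=1}^{n} ((−1)^{k+1}/(2n+k)!) · C(n+1,k+1) ·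
∑_{l=0}^{⌊k/2⌋} (−1)^l · C(k,l) · (k/2 − l)^{k+2n}`, all arithmetic in `ℚ`. -/
theorem bernoulli_even_double_sum (n : ℕ) (hn : 1 ≤ n) :
    bernoulli (2 * n) =
      (2 ^ (2 * n + 1) * (Nat.factorial (2 * n) : ℚ) / (2 ^ (2 * n) - 2)) *
        ∑ k ∈ Finset.Icc 1 n,
          ((-1 : ℚ) ^ (k + 1) / (Nat.factorial (2 * n + k) : ℚ)) *
            (Nat.choose (n + 1) (k + 1) : ℚ) *
            ∑ l ∈ Finset.range (k / 2 + 1),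
              (-1 : ℚ) ^ l * (Nat.choose k l : ℚ) * ((k : ℚ) / 2 - (l : ℚ)) ^ (k + 2 * n) := by
  classical
  have h1 : ((2:ℚ)^(2*n) - 2) ≠ 0 := by
    have h4 : (4:ℚ) ≤ 2^(2*n) := by
      calc (4:ℚ) = 2^2 := by norm_num
        _ ≤ 2^(2*n) := by
          apply pow_le_pow_right₀ (by norm_num : (1:ℚ) ≤ 2) (by omega)
    linarith
  have hterm : ∀ k ∈ Finset.Icc 1 n,
      ((-1 : ℚ) ^ (k + 1) / (Nat.factorial (2 * n + k) : ℚ)) * (Nat.choose (n + 1) (k + 1) : ℚ) *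
        ∑ l ∈ Finset.range (k / 2 + 1),
          (-1 : ℚ) ^ l * (Nat.choose k l : ℚ) * ((k : ℚ) / 2 - (l : ℚ)) ^ (k + 2 * n)
      = (-1:ℚ)^(k+1) * ((Nat.choose (n+1) (k+1) : ℕ) : ℚ) *
          PowerSeries.coeff (R := ℚ) (2*n+k) (BernoulliDS.Sh^k) * ((2:ℚ)^(2*n+1))⁻¹ := by
    intro k hk
    rw [Finset.mem_Icc] at hk
    have hhalf := BernoulliDS.half_sum n k hk.1
    have hcoeff := BernoulliDS.coeff_Sh_pow k (2*n+k)
    have hFs : ∑ l ∈ Finset.range (k+1),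
          (-1:ℚ)^l * (Nat.choose k l : ℚ) * ((k:ℚ) - 2*(l:ℚ))^(2*n+k)
        = 2^(2*n+k) * ∑ l ∈ Finset.range (k+1),
            (-1:ℚ)^l * (Nat.choose k l : ℚ) * ((k:ℚ)/2 - (l:ℚ))^(k+2*n) := by
      rw [Finset.mul_sum]
      apply Finset.sum_congr rfl
      intro l _
      rw [show 2*n+k = k+2*n by omega,
        show ((k:ℚ) - 2*(l:ℚ)) = 2*((k:ℚ)/2 - (l:ℚ)) by ring, mul_pow]
      ring
    rw [hFs, hhalf] at hcoeff
    rw [hcoeff]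
    have hf : ((2*n+k).factorial : ℚ) ≠ 0 := by exact_mod_cast Nat.factorial_ne_zero _
    field_simp
    ring
  rw [Finset.sum_congr rfl hterm, ← Finset.sum_mul, BernoulliDS.Sigma_eq n hn]
  have hf' : (((2*n).factorial : ℕ) : ℚ) ≠ 0 := by exact_mod_cast Nat.factorial_ne_zero _
  field_simp
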